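/- Quantum speed limit: let H : ℝ → (E →L[ℂ] E) be a continuous family of self-adjoint bounded operators on a complex Hilbert space E, let ψ₀ be a unit vector, and let ψ : ℝ → E satisfy ψ 0 = ψ₀ and, for every t, ψ'(t) = −i·(H t)(ψ t). Then for every T ≥ 0, arccos|⟨ψ₀, ψ T⟩| ≤ ∫₀ᵀ √(‖(H t)ψ₀‖² − (Re⟨ψ₀, (H t)ψ₀⟩)²) dt. -/

import Mathlib

open scoped InnerProductSpace
open Real

lemma qsl_arccos_anti : Antitone Real.arccos := fun a b hab => by
  simp only [Real.arccos]
  have := Real.monotone_arcsin hab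
  linarith

lemma qsl_aux {T : ℝ} (hT : 0 ≤ T) (ρ ρ' D : ℝ → ℝ)
    (hρ : ∀ t, HasDerivAt ρ (ρ' t) t) (hD : Continuous D) (hDnn : ∀ t, 0 ≤ D t)
    (hρ0 : ρ 0 = 1)
    (hbound : ∀ t, |ρ' t| ≤ D t * Real.sqrt (1 - ρ t ^ 2)) :
    Real.arccos (ρ T) ≤ ∫ t in (0:ℝ)..T, D t := by
  set u : ℝ → ℝ := fun t => ∫ s in (0:ℝ)..t, D s with hu_def
  have hu : ∀ t, HasDerivAt u (D t) t := fun t =>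
    (hD.integral_hasStrictDerivAt 0 t).hasDerivAt
  have hu0 : u 0 = 0 := intervalIntegral.integral_same
  have humono : ∀ x, x ≤ T → u x ≤ u T := by
    intro x hx
    have hadd : (∫ s in (0:ℝ)..x, D s) + ∫ s in x..T, D s = ∫ s in (0:ℝ)..T, D s :=
      intervalIntegral.integral_add_adjacent_intervals (hD.intervalIntegrable _ _)
        (hD.intervalIntegrable _ _)
    have hnn : 0 ≤ ∫ s in x..T, D s :=
      intervalIntegral.integral_nonneg hx fun s _ => hDnn s
    simp only [hu_def]
    linarith
  have hunn : ∀ x, 0 ≤ x → 0 ≤ u x := fun x hx =>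
    intervalIntegral.integral_nonneg hx fun s _ => hDnn s
  by_cases hπ : Real.pi ≤ u T
  · exact (Real.arccos_le_pi _).trans hπ
  push_neg at hπ
  refine le_of_forall_pos_le_add ?_
  intro η hη
  set c : ℝ := min η (Real.pi - u T) with hc_def
  have hc : 0 < c := lt_min hη (by linarith)
  set δ : ℝ := c / 4 with hδ_def
  set ε : ℝ := c / (4 * (T + 1)) with hε_def
  have hδpos : 0 < δ := by positivity
  have hεpos : 0 < ε := by positivity
  have hεT : ε * T + δ ≤ c / 2 := by
    have h1 : ε * T ≤ c / 4 := by
      rw [hε_def]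
      rw [div_mul_eq_mul_div, div_le_div_iff₀ (by positivity) (by norm_num)]
      nlinarith
    linarith
  have hsmax : u T + (ε * T + δ) < Real.pi := by
    have : c ≤ Real.pi - u T := min_le_right _ _
    linarith
  -- the comparison function
  set F : ℝ → ℝ := fun t => Real.cos (u t + (ε * t + δ)) with hF_def
  set F' : ℝ → ℝ := fun t => -((D t + ε) * Real.sin (u t + (ε * t + δ))) with hF'_def
  have hF : ∀ t, HasDerivAt F (F' t) t := by
    intro t
    have hs : HasDerivAt (fun t => u t + (ε * t + δ)) (D t + ε) t := by
      have h1 : HasDerivAt (fun t : ℝ => ε * t + δ) ε t := by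
        simpa using ((hasDerivAt_id t).const_mul ε).add_const δ
      exact (hu t).add h1
    have := (Real.hasDerivAt_cos (u t + (ε * t + δ))).comp t hs
    refine this.congr_deriv ?_
    simp [hF'_def]
    ring
  have key : F T ≤ ρ T := by
    have := image_le_of_deriv_right_lt_deriv_boundary (f := F) (f' := F')
      (a := 0) (b := T) (B := ρ) (B' := ρ')
      (fun x _ => (hF x).continuousAt.continuousWithinAt)
      (fun x _ => (hF x).hasDerivWithinAt)
      (by
        have : F 0 = Real.cos δ := by simp [hF_def, hu0]
        rw [this, hρ0]; exact Real.cos_le_one δ)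
      hρ
      (by
        intro x hx hFx
        have hx0 : 0 ≤ x := hx.1
        have hxT : x < T := hx.2
        set s : ℝ := u x + (ε * x + δ) with hs_def
        have hs0 : 0 < s := by
          have := hunn x hx0
          have : 0 ≤ ε * x := by positivity
          simp only [hs_def]
          nlinarith [hunn x hx0]
        have hsπ : s < Real.pi := by
          have h1 : u x ≤ u T := humono x hxT.le
          have h2 : ε * x ≤ ε * T := by nlinarith
          simp only [hs_def]
          linarith
        have hsin : 0 < Real.sin s := Real.sin_pos_of_pos_of_lt_pi hs0 hsπ
        have hsqrt : Real.sqrt (1 - ρ x ^ 2) = Real.sin s := by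
          rw [← hFx]
          have : (1 : ℝ) - F x ^ 2 = Real.sin s ^ 2 := by
            simp only [hF_def, ← hs_def]
            rw [Real.sin_sq]
          rw [this, Real.sqrt_sq hsin.le]
        have hlow : -(D x * Real.sin s) ≤ ρ' x := by
          have := hbound x
          rw [hsqrt] at this
          have := neg_abs_le (ρ' x)
          linarith [abs_le.mp (hbound x) |>.1, hsqrt]
        have hstrict : F' x < -(D x * Real.sin s) := by
          simp only [hF'_def, ← hs_def]
          have : D x * Real.sin s < (D x + ε) * Real.sin s := by
            nlinarith
          linarith
        exact lt_of_lt_of_le hstrict hlow)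
    exact this (Set.right_mem_Icc.mpr hT)
  -- conclude
  have hs0 : 0 ≤ u T + (ε * T + δ) := by
    have := hunn T hT
    positivity
  have harc : Real.arccos (ρ T) ≤ u T + (ε * T + δ) := by
    calc Real.arccos (ρ T) ≤ Real.arccos (F T) := qsl_arccos_anti key
    _ = u T + (ε * T + δ) := by
        simp only [hF_def]
        exact Real.arccos_cos hs0 hsmax.le
  have : ε * T + δ ≤ η := by
    have : c ≤ η := min_le_left _ _
    linarith
  linarith

/-- Quantum speed limit (in the initial state): if
`ψ 0 = ψ₀` and `ψ' t = -i (H t) (ψ t)` for all `t`, then for `T ≥ 0`,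
`arccos |⟨ψ₀, ψ T⟩| ≤ ∫₀ᵀ √(‖(H t)ψ₀‖² - (Re⟨ψ₀, (H t)ψ₀⟩)²) dt`. -/
theorem quantum_speed_limit
    {E : Type*} [NormedAddCommGroup E] [InnerProductSpace ℂ E] [CompleteSpace E]
    (H : ℝ → (E →L[ℂ] E)) (hHcont : Continuous H)
    (hHsa : ∀ t, ∀ x y : E, ⟪(H t) x, y⟫_ℂ = ⟪x, (H t) y⟫_ℂ)
    (ψ₀ : E) (hψ₀ : ‖ψ₀‖ = 1) (ψ : ℝ → E) (hinit : ψ 0 = ψ₀)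
    (hψ : ∀ t, HasDerivAt ψ ((-Complex.I) • (H t) (ψ t)) t)
    (T : ℝ) (hT : 0 ≤ T) :
    Real.arccos ‖⟪ψ₀, ψ T⟫_ℂ‖
      ≤ ∫ t in (0 : ℝ)..T,
          Real.sqrt (‖(H t) ψ₀‖ ^ 2 - ((⟪ψ₀, (H t) ψ₀⟫_ℂ).re) ^ 2) := by
  set f : ℝ → ℂ := fun t => ⟪ψ₀, ψ t⟫_ℂ with hf_def
  set a : ℝ → ℝ := fun t => (⟪ψ₀, (H t) ψ₀⟫_ℂ).re with ha_def
  set v : ℝ → E := fun t => (H t) ψ₀ - (a t : ℂ) • ψ₀ with hv_def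
  have hreal : ∀ t (x : E), ⟪x, (H t) x⟫_ℂ = ((⟪x, (H t) x⟫_ℂ).re : ℂ) := by
    intro t x
    have h1 : (starRingEnd ℂ) ⟪x, (H t) x⟫_ℂ = ⟪(H t) x, x⟫_ℂ := inner_conj_symm _ _
    rw [hHsa t] at h1
    exact (Complex.conj_eq_iff_re.mp h1).symm
  have hψ0inner : ⟪ψ₀, ψ₀⟫_ℂ = 1 := by
    rw [inner_self_eq_norm_sq_to_K, hψ₀]; norm_num
  -- norm preservation
  have hconst : ∀ t, ⟪ψ t, ψ t⟫_ℂ = 1 := by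
    have hd : ∀ t, HasDerivAt (fun t => ⟪ψ t, ψ t⟫_ℂ) 0 t := by
      intro t
      have h := HasDerivAt.inner ℂ (hψ t) (hψ t)
      refine h.congr_deriv ?_
      rw [inner_smul_right, inner_smul_left, hHsa t (ψ t) (ψ t)]
      simp [Complex.conj_I]
    have hdiff : Differentiable ℝ (fun t => ⟪ψ t, ψ t⟫_ℂ) := fun t => (hd t).differentiableAt
    have h0 : ∀ x, deriv (fun t => ⟪ψ t, ψ t⟫_ℂ) x = 0 := fun x => (hd x).deriv
    intro t
    have := is_const_of_deriv_eq_zero hdiff h0 t 0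
    rw [this, hinit, hψ0inner]
  have hnorm : ∀ t, ‖ψ t‖ = 1 := by
    intro t
    have h2 : (‖ψ t‖ : ℝ) ^ 2 = 1 := by
      rw [← inner_self_eq_norm_sq (𝕜 := ℂ)]
      simpa using congrArg Complex.re (hconst t)
    nlinarith [norm_nonneg (ψ t)]
  -- derivative of f
  have hf' : ∀ t, HasDerivAt f ((-Complex.I) * ⟪ψ₀, (H t) (ψ t)⟫_ℂ) t := by
    intro t
    have h := HasDerivAt.inner ℂ (hasDerivAt_const t ψ₀) (hψ t)
    simpa [inner_smul_right] using h
  -- continuity facts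
  have hHψ₀cont : Continuous fun t => (H t) ψ₀ := hHcont.clm_apply continuous_const
  have hacont : Continuous a :=
    Complex.continuous_re.comp (Continuous.inner continuous_const hHψ₀cont)
  -- phase
  set α : ℝ → ℝ := fun t => ∫ s in (0:ℝ)..t, a s with hα_def
  have hα : ∀ t, HasDerivAt α (a t) t := fun t =>
    (hacont.integral_hasStrictDerivAt 0 t).hasDerivAt
  set ph : ℝ → ℂ := fun t => Complex.exp ((α t : ℂ) * Complex.I) with hph_def
  have hph : ∀ t, HasDerivAt ph (ph t * ((a t : ℂ) * Complex.I)) t := by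
    intro t
    have h1 : HasDerivAt (fun t => ((α t : ℂ) * Complex.I)) ((a t : ℂ) * Complex.I) t :=
      ((hα t).ofReal_comp).mul_const Complex.I
    exact h1.cexp
  have hph1 : ∀ t, ‖ph t‖ = 1 := fun t => Complex.norm_exp_ofReal_mul_I (α t)
  -- inner products with v
  have hvorth : ∀ t, ⟪v t, ψ₀⟫_ℂ = 0 := by
    intro t
    have h1 : ⟪(H t) ψ₀, ψ₀⟫_ℂ = ((a t : ℝ) : ℂ) := by
      rw [hHsa t]; exact hreal t ψ₀
    rw [hv_def]
    simp only [inner_sub_left, inner_smul_left, h1, hψ0inner, Complex.conj_ofReal]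
    ring
  have hvinner : ∀ t, ⟪v t, ψ t⟫_ℂ = ⟪ψ₀, (H t) (ψ t)⟫_ℂ - (a t : ℂ) * f t := by
    intro t
    rw [hv_def]
    simp only [inner_sub_left, inner_smul_left, Complex.conj_ofReal, hHsa t ψ₀ (ψ t)]
    rfl
  -- the real "overlap" function
  set g : ℝ → ℂ := fun t => ph t * f t with hg_def
  have hg : ∀ t, HasDerivAt g ((-Complex.I) * (ph t * ⟪v t, ψ t⟫_ℂ)) t := by
    intro t
    have h := (hph t).mul (hf' t)
    refine h.congr_deriv ?_
    rw [hvinner t]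
    ring
  set ρ : ℝ → ℝ := fun t => (g t).re with hρ_def
  set ρ' : ℝ → ℝ := fun t => ((-Complex.I) * (ph t * ⟪v t, ψ t⟫_ℂ)).re with hρ'_def
  have hρ : ∀ t, HasDerivAt ρ (ρ' t) t := by
    intro t
    have h := Complex.reCLM.hasFDerivAt.comp_hasDerivAt t (hg t)
    exact h
  have hρle : ∀ t, ρ t ≤ ‖f t‖ := by
    intro t
    calc ρ t ≤ ‖g t‖ := Complex.re_le_norm _
    _ = ‖f t‖ := by rw [hg_def]; simp [map_mul, hph1 t]
  have hρabs : ∀ t, |ρ t| ≤ ‖f t‖ := by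
    intro t
    calc |ρ t| ≤ ‖g t‖ := Complex.abs_re_le_norm _
    _ = ‖f t‖ := by rw [hg_def]; simp [map_mul, hph1 t]
  -- the key derivative bound
  have hbound : ∀ t, |ρ' t| ≤ ‖v t‖ * Real.sqrt (1 - ρ t ^ 2) := by
    intro t
    have h1 : |ρ' t| ≤ ‖⟪v t, ψ t⟫_ℂ‖ := by
      calc |ρ' t| ≤ ‖(-Complex.I) * (ph t * ⟪v t, ψ t⟫_ℂ)‖ :=
            Complex.abs_re_le_norm _
      _ = ‖⟪v t, ψ t⟫_ℂ‖ := by simp [map_mul, hph1 t]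
    have h2 : ⟪v t, ψ t⟫_ℂ = ⟪v t, ψ t - f t • ψ₀⟫_ℂ := by
      rw [inner_sub_right, inner_smul_right, hvorth t]; ring
    have h3 : ‖⟪v t, ψ t⟫_ℂ‖ ≤ ‖v t‖ * ‖ψ t - f t • ψ₀‖ := by
      rw [h2]
      exact norm_inner_le_norm _ _
    have h4 : ‖ψ t - f t • ψ₀‖ ^ 2 = 1 - ‖f t‖ ^ 2 := by
      rw [norm_sub_sq (𝕜 := ℂ), inner_smul_right]
      have hc : ⟪ψ t, ψ₀⟫_ℂ = (starRingEnd ℂ) (f t) := (inner_conj_symm _ _).symm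
      rw [hc, Complex.mul_conj, norm_smul, hnorm t, hψ₀]
      simp [Complex.normSq_eq_norm_sq, ← Complex.ofReal_pow, Complex.ofReal_re]
      ring
    have h5 : ‖ψ t - f t • ψ₀‖ ≤ Real.sqrt (1 - ρ t ^ 2) := by
      rw [show ‖ψ t - f t • ψ₀‖ = Real.sqrt (‖ψ t - f t • ψ₀‖ ^ 2) from
        (Real.sqrt_sq (norm_nonneg _)).symm, h4]
      apply Real.sqrt_le_sqrt
      have h6 := mul_self_le_mul_self (abs_nonneg (ρ t)) (hρabs t)
      nlinarith [sq_abs (ρ t)]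
    calc |ρ' t| ≤ ‖⟪v t, ψ t⟫_ℂ‖ := h1
    _ ≤ ‖v t‖ * ‖ψ t - f t • ψ₀‖ := h3
    _ ≤ ‖v t‖ * Real.sqrt (1 - ρ t ^ 2) :=
        mul_le_mul_of_nonneg_left h5 (norm_nonneg _)
  -- initial value
  have hρ0 : ρ 0 = 1 := by
    have hα0 : α 0 = 0 := intervalIntegral.integral_same
    have hf0 : f 0 = 1 := by rw [hf_def]; simp only [hinit]; exact hψ0inner
    rw [hρ_def, hg_def]
    simp [hα0, hph_def, hf0]
  -- continuity of the speed
  have hvcont : Continuous v :=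
    hHψ₀cont.sub ((Complex.continuous_ofReal.comp hacont).smul continuous_const)
  -- integrand identification
  have hint : ∀ t, Real.sqrt (‖(H t) ψ₀‖ ^ 2 - ((⟪ψ₀, (H t) ψ₀⟫_ℂ).re) ^ 2) = ‖v t‖ := by
    intro t
    have h1 : ‖v t‖ ^ 2 = ‖(H t) ψ₀‖ ^ 2 - a t ^ 2 := by
      have e1 : (⟪(H t) ψ₀, ψ₀⟫_ℂ) = ((a t : ℝ) : ℂ) := by
        rw [hHsa t]; exact hreal t ψ₀
      simp only [hv_def]
      rw [norm_sub_sq (𝕜 := ℂ), inner_smul_right, e1, norm_smul, hψ₀]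
      simp [Complex.norm_real, ← Complex.ofReal_mul, sq_abs]
      ring
    rw [show ((⟪ψ₀, (H t) ψ₀⟫_ℂ).re) = a t from rfl, ← h1, Real.sqrt_sq (norm_nonneg _)]
  -- apply the comparison lemma
  have hmain := qsl_aux hT ρ ρ' (fun t => ‖v t‖) hρ hvcont.norm (fun t => norm_nonneg _)
    hρ0 hbound
  calc Real.arccos ‖f T‖ ≤ Real.arccos (ρ T) := qsl_arccos_anti (hρle T)
  _ ≤ ∫ t in (0:ℝ)..T, ‖v t‖ := hmain
  _ = ∫ t in (0:ℝ)..T, Real.sqrt (‖(H t) ψ₀‖ ^ 2 - ((⟪ψ₀, (H t) ψ₀⟫_ℂ).re) ^ 2) := by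
      exact (intervalIntegral.integral_congr fun x _ => hint x).symm
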